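/- Rate changing conditions in the bursty-data-arrival problem (P6b): Consider instants 0 = t_0 < t_1 < ⋯ < t_M with segment lengths T_m = t_m − t_{m−1}, required cumulative data amounts R_1 ≤ R_2 ≤ ⋯ ≤ R_M (data transmission lower bounds) and arrived cumulative data amounts A_1 ≤ A_2 ≤ ⋯ ≤ A_M with R_m ≤ A_m (data arrival upper bounds). A rate vector r = (r_1, …, r_M), r_m ≥ 0, is feasible if R_m ≤ ∑_{k=1}^m r_k T_k ≤ A_m for every m = 1, …, M, and its energy is E(r) = ∑_{m=1}^M (e^{r_m/B} − 1)(σ²/h) T_m with B, σ², h > 0. Let r* be a feasible rate vector minimizing E over all feasible rate vectors, and let m ∈ {1, …, M−1}. If r*_{m+1} < r*_m, then the transmission constraint is tight at t_m: ∑_{k=1}^m r*_k T_k = R_m (the server's data buffer is empty). If r*_{m+1} > r*_m, then the arrival constraint is tight at t_m: ∑_{k=1}^m r*_k T_k = A_m (all data so far collected by the sensor has been transmitted). -/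

import Mathlib

/-- Energy consumption of a rate vector `r` over the `M` segments determined by the
instants `t`, with segment lengths `T m = t m − t (m−1)`. -/
noncomputable def energyBDA (B σ2 h : ℝ) (t : ℕ → ℝ) (M : ℕ) (r : ℕ → ℝ) : ℝ :=
  ∑ m ∈ Finset.Icc 1 M, (Real.exp (r m / B) - 1) * (σ2 / h) * (t m - t (m - 1))

/-- Feasibility for the bursty-data-arrival problem (P6b): nonnegative rates whose
cumulative transmitted data lies between the required cumulative data `R_m`
(transmission lower bounds) and the arrived cumulative data `A_m`
(arrival upper bounds) at every instant `t_m`. -/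
def FeasibleBDA (t R A : ℕ → ℝ) (M : ℕ) (r : ℕ → ℝ) : Prop :=
  (∀ m ∈ Finset.Icc 1 M, 0 ≤ r m) ∧
  (∀ m ∈ Finset.Icc 1 M,
    R m ≤ ∑ k ∈ Finset.Icc 1 m, r k * (t k - t (k - 1)) ∧
    ∑ k ∈ Finset.Icc 1 m, r k * (t k - t (k - 1)) ≤ A m)

lemma exp_neg_le_aux (δ : ℝ) (h : 0 ≤ δ) : Real.exp (-δ) ≤ 1 - δ + δ^2 := by
  have h1 : 1 + δ ≤ Real.exp δ := by linarith [Real.add_one_le_exp δ]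
  have h2 : Real.exp (-δ) * Real.exp δ = 1 := by rw [← Real.exp_add]; simp
  have h3 : (0:ℝ) < Real.exp (-δ) := Real.exp_pos _
  have h4 : Real.exp (-δ) * (1 + δ) ≤ 1 := by
    nlinarith [mul_le_mul_of_nonneg_left h1 h3.le]
  nlinarith [pow_nonneg h 3, sq_nonneg δ]

lemma exp_le_aux (δ : ℝ) (h1 : δ ≤ 1/2) : Real.exp δ ≤ 1 + δ + 2*δ^2 := by
  have ha : 1 - δ ≤ Real.exp (-δ) := by
    have := Real.add_one_le_exp (-δ); linarith
  have h2 : Real.exp δ * Real.exp (-δ) = 1 := by rw [← Real.exp_add]; simp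
  have h3 : (0:ℝ) < Real.exp δ := Real.exp_pos _
  have h4 : Real.exp δ * (1 - δ) ≤ 1 := by
    nlinarith [mul_le_mul_of_nonneg_left ha h3.le]
  nlinarith [sq_nonneg δ]

lemma key_perturb (a b d1 d2 C : ℝ) (hab : b < a) (hd1 : 0 < d1) (hd2 : 0 < d2)
    (hC : 0 < C) :
    ∃ ε : ℝ, 0 < ε ∧ ε ≤ C ∧
      d1 * Real.exp (a - ε / d1) + d2 * Real.exp (b + ε / d2)
        < d1 * Real.exp a + d2 * Real.exp b := by
  have hEa0 : 0 < Real.exp a := Real.exp_pos a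
  have hEb0 : 0 < Real.exp b := Real.exp_pos b
  have hlt : Real.exp b < Real.exp a := Real.exp_lt_exp.mpr hab
  set Ea := Real.exp a with hEa
  set Eb := Real.exp b with hEb
  set K : ℝ := Ea/d1 + 2*Eb/d2 with hK
  have hK0 : 0 < K := by positivity
  set ε : ℝ := min C (min (d2/2) ((Ea - Eb)/(2*K))) with hεdef
  have hε0 : 0 < ε := lt_min hC (lt_min (by positivity) (div_pos (by linarith) (by positivity)))
  have hεC : ε ≤ C := min_le_left _ _
  have hεd2 : ε/d2 ≤ 1/2 := by
    have h' : ε ≤ d2/2 := le_trans (min_le_right _ _) (min_le_left _ _)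
    rw [div_le_div_iff₀ hd2 (by norm_num : (0:ℝ) < 2)]; linarith
  have hεK : ε * K ≤ (Ea - Eb)/2 := by
    have h' : ε ≤ (Ea - Eb)/(2*K) := le_trans (min_le_right _ _) (min_le_right _ _)
    calc ε * K ≤ ((Ea - Eb)/(2*K)) * K := by gcongr
      _ = (Ea - Eb)/2 := by field_simp
  clear hεdef
  clear_value ε K Ea Eb
  refine ⟨ε, hε0, hεC, ?_⟩
  have e1 : Real.exp (a - ε/d1) = Ea * Real.exp (-(ε/d1)) := by
    rw [hEa, ← Real.exp_add]; ring_nf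
  have e2 : Real.exp (b + ε/d2) = Eb * Real.exp (ε/d2) := by
    rw [hEb, ← Real.exp_add]
  have b1 : Real.exp (-(ε/d1)) ≤ 1 - ε/d1 + (ε/d1)^2 := exp_neg_le_aux _ (by positivity)
  have b2 : Real.exp (ε/d2) ≤ 1 + ε/d2 + 2*(ε/d2)^2 := exp_le_aux _ hεd2
  have t1 : d1 * Real.exp (a - ε/d1) ≤ d1*Ea - ε*Ea + ε^2*Ea/d1 := by
    rw [e1]
    calc d1 * (Ea * Real.exp (-(ε/d1))) ≤ d1 * (Ea * (1 - ε/d1 + (ε/d1)^2)) := by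
          gcongr
      _ = d1*Ea - ε*Ea + ε^2*Ea/d1 := by field_simp
  have t2 : d2 * Real.exp (b + ε/d2) ≤ d2*Eb + ε*Eb + 2*ε^2*Eb/d2 := by
    rw [e2]
    calc d2 * (Eb * Real.exp (ε/d2)) ≤ d2 * (Eb * (1 + ε/d2 + 2*(ε/d2)^2)) := by
          gcongr
      _ = d2*Eb + ε*Eb + 2*ε^2*Eb/d2 := by field_simp
  have hbr : Eb - Ea + ε*K < 0 := by nlinarith [hεK, hlt]
  have h5 : ε * (Eb - Ea + ε*K) < 0 := mul_neg_of_pos_of_neg hε0 hbr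
  have h6 : ε*Eb - ε*Ea + ε^2*Ea/d1 + 2*ε^2*Eb/d2 < 0 := by
    have heq : ε * (Eb - Ea + ε*K) = ε*Eb - ε*Ea + ε^2*Ea/d1 + 2*ε^2*Eb/d2 := by
      rw [hK]; field_simp; ring
    linarith [heq ▸ h5]
  linarith

lemma sum_shift_aux (t : ℕ → ℝ) (rr : ℕ → ℝ) (c1 c2 : ℝ) (m n : ℕ) :
    ∑ k ∈ Finset.Icc 1 n,
      (rr k + ((if k = m then c1 else 0) + (if k = m + 1 then c2 else 0))) * (t k - t (k - 1))
    = (∑ k ∈ Finset.Icc 1 n, rr k * (t k - t (k - 1)))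
      + ((if m ∈ Finset.Icc 1 n then c1 * (t m - t (m - 1)) else 0)
      + (if (m + 1) ∈ Finset.Icc 1 n then c2 * (t (m + 1) - t (m + 1 - 1)) else 0)) := by
  simp only [add_mul, Finset.sum_add_distrib, ite_mul, zero_mul, Finset.sum_ite_eq']

lemma energy_two_diff (B σ2 h : ℝ) (t : ℕ → ℝ) (M : ℕ) (r r' : ℕ → ℝ) (m : ℕ)
    (hm : 1 ≤ m) (hmM : m + 1 ≤ M)
    (hagree : ∀ k, k ≠ m → k ≠ m + 1 → r' k = r k) :
    energyBDA B σ2 h t M r' = energyBDA B σ2 h t M r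
      + ((Real.exp (r' m / B) - Real.exp (r m / B)) * (σ2/h) * (t m - t (m-1))
      + (Real.exp (r' (m+1) / B) - Real.exp (r (m+1) / B)) * (σ2/h) * (t (m+1) - t m)) := by
  unfold energyBDA
  have key : ∀ k ∈ Finset.Icc 1 M,
      (Real.exp (r' k / B) - 1) * (σ2/h) * (t k - t (k-1))
      = (Real.exp (r k / B) - 1) * (σ2/h) * (t k - t (k-1))
        + ((if k = m then (Real.exp (r' m / B) - Real.exp (r m / B)) * (σ2/h) * (t m - t (m-1)) else 0)
        + (if k = m+1 then (Real.exp (r' (m+1) / B) - Real.exp (r (m+1) / B)) * (σ2/h) * (t (m+1) - t m) else 0)) := by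
    intro k _
    by_cases h1 : k = m
    · subst h1
      have hne : k ≠ k + 1 := by omega
      rw [if_pos rfl, if_neg hne]
      ring
    · by_cases h2 : k = m + 1
      · subst h2
        have hm1 : m + 1 - 1 = m := by omega
        rw [if_neg h1, if_pos rfl, hm1]
        ring
      · rw [hagree k h1 h2]
        simp [h1, h2]
  rw [Finset.sum_congr rfl key]
  rw [Finset.sum_add_distrib, Finset.sum_add_distrib, Finset.sum_ite_eq', Finset.sum_ite_eq']
  have hmem1 : m ∈ Finset.Icc 1 M := by simp only [Finset.mem_Icc]; omega
  have hmem2 : m + 1 ∈ Finset.Icc 1 M := by simp only [Finset.mem_Icc]; omega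
  rw [if_pos hmem1, if_pos hmem2]

/-- Rate changing conditions in the bursty-data-arrival problem (P6b): under an
optimal rate vector, the rate can decrease at `t_m` only if the transmission
constraint is tight there (the server's data buffer is empty), and it can increase
at `t_m` only if the arrival constraint is tight there (all data so far collected
by the sensor has been transmitted). -/
theorem rate_change_conditions_bursty_arrival
    (M : ℕ) (t R A rstar : ℕ → ℝ) (B σ2 h : ℝ)
    (hB : 0 < B) (hσ2 : 0 < σ2) (hh : 0 < h)
    (ht0 : t 0 = 0) (ht : ∀ m, m < M → t m < t (m + 1))
    (hR_mono : ∀ m, 1 ≤ m → m + 1 ≤ M → R m ≤ R (m + 1))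
    (hA_mono : ∀ m, 1 ≤ m → m + 1 ≤ M → A m ≤ A (m + 1))
    (hRA : ∀ m ∈ Finset.Icc 1 M, R m ≤ A m)
    (hfeas : FeasibleBDA t R A M rstar)
    (hopt : ∀ r, FeasibleBDA t R A M r →
      energyBDA B σ2 h t M rstar ≤ energyBDA B σ2 h t M r)
    (m : ℕ) (hm1 : 1 ≤ m) (hmM : m + 1 ≤ M) :
    (rstar (m + 1) < rstar m →
      ∑ k ∈ Finset.Icc 1 m, rstar k * (t k - t (k - 1)) = R m) ∧
    (rstar m < rstar (m + 1) →
      ∑ k ∈ Finset.Icc 1 m, rstar k * (t k - t (k - 1)) = A m) := by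
  obtain ⟨hpos, hcum⟩ := hfeas
  have hT1 : 0 < t m - t (m - 1) := by
    have := ht (m - 1) (by omega)
    have hk : m - 1 + 1 = m := by omega
    rw [hk] at this; linarith
  have hT2 : 0 < t (m + 1) - t m := by
    have := ht m (by omega); linarith
  have hmem : m ∈ Finset.Icc 1 M := by simp only [Finset.mem_Icc]; omega
  have hmem1 : m + 1 ∈ Finset.Icc 1 M := by simp only [Finset.mem_Icc]; omega
  set S := ∑ k ∈ Finset.Icc 1 m, rstar k * (t k - t (k - 1)) with hS
  constructor
  · -- decrease case
    intro hdec
    by_contra hne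
    have hSm : R m < S := lt_of_le_of_ne (hcum m hmem).1 (Ne.symm hne)
    have hrm0 : 0 < rstar m := lt_of_le_of_lt (hpos (m + 1) hmem1) hdec
    have hab : rstar (m + 1) / B < rstar m / B := by gcongr
    obtain ⟨ε, hε0, hεC, hkey⟩ := key_perturb (rstar m / B) (rstar (m + 1) / B)
      (B * (t m - t (m - 1))) (B * (t (m + 1) - t m))
      (min (S - R m) (rstar m * (t m - t (m - 1)))) hab
      (mul_pos hB hT1) (mul_pos hB hT2)
      (lt_min (by linarith) (mul_pos hrm0 hT1))
    have hεS : ε ≤ S - R m := le_trans hεC (min_le_left _ _)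
    have hεr : ε ≤ rstar m * (t m - t (m - 1)) := le_trans hεC (min_le_right _ _)
    set r' : ℕ → ℝ := fun k => rstar k +
      ((if k = m then -(ε / (t m - t (m - 1))) else 0) +
       (if k = m + 1 then ε / (t (m + 1) - t m) else 0)) with hr'
    have hr'm : r' m = rstar m - ε / (t m - t (m - 1)) := by
      have hne2 : m ≠ m + 1 := by omega
      show rstar m + ((if m = m then -(ε / (t m - t (m - 1))) else 0) +
        (if m = m + 1 then ε / (t (m + 1) - t m) else 0)) = _
      rw [if_pos rfl, if_neg hne2]; ring
    have hr'm1 : r' (m + 1) = rstar (m + 1) + ε / (t (m + 1) - t m) := by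
      have hne2 : m + 1 ≠ m := by omega
      show rstar (m + 1) + ((if m + 1 = m then -(ε / (t m - t (m - 1))) else 0) +
        (if m + 1 = m + 1 then ε / (t (m + 1) - t m) else 0)) = _
      rw [if_neg hne2, if_pos rfl]; ring
    have hagree : ∀ k, k ≠ m → k ≠ m + 1 → r' k = rstar k := by
      intro k h1 h2; simp [hr', h1, h2]
    have hsum : ∀ n, ∑ k ∈ Finset.Icc 1 n, r' k * (t k - t (k - 1))
        = (∑ k ∈ Finset.Icc 1 n, rstar k * (t k - t (k - 1)))
          + ((if m ∈ Finset.Icc 1 n then -ε else 0)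
          + (if (m + 1) ∈ Finset.Icc 1 n then ε else 0)) := by
      intro n
      rw [hr', sum_shift_aux]
      congr 2
      · split
        · field_simp
        · rfl
      · split
        · have hm11 : m + 1 - 1 = m := by omega
          rw [hm11]; field_simp
        · rfl
    have hfeas' : FeasibleBDA t R A M r' := by
      constructor
      · intro k hk
        by_cases h1 : k = m
        · subst h1
          rw [hr'm]
          rw [sub_nonneg, div_le_iff₀ hT1]; linarith
        · by_cases h2 : k = m + 1
          · subst h2
            rw [hr'm1]
            have h0 := hpos (m + 1) hmem1
            have h2 : 0 ≤ ε / (t (m + 1) - t m) := le_of_lt (div_pos hε0 hT2)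
            linarith
          · rw [hagree k h1 h2]; exact hpos k hk
      · intro n hn
        rw [hsum n]
        obtain ⟨hlo, hhi⟩ := hcum n hn
        by_cases hnm : m ≤ n
        · by_cases hnm1 : m + 1 ≤ n
          · rw [if_pos (by simp only [Finset.mem_Icc]; omega),
              if_pos (by simp only [Finset.mem_Icc]; omega)]
            constructor <;> linarith
          · have hnm' : n = m := by omega
            subst hnm'
            rw [if_pos (by simp only [Finset.mem_Icc]; omega),
              if_neg (by simp only [Finset.mem_Icc]; omega)]
            constructor <;> linarith
        · rw [if_neg (by simp only [Finset.mem_Icc]; omega),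
            if_neg (by simp only [Finset.mem_Icc]; omega)]
          constructor <;> linarith
    have hE := hopt r' hfeas'
    have hEdiff := energy_two_diff B σ2 h t M rstar r' m hm1 hmM hagree
    rw [hr'm, hr'm1] at hEdiff
    have hexp1 : (rstar m - ε / (t m - t (m - 1))) / B
        = rstar m / B - ε / (B * (t m - t (m - 1))) := by
      field_simp
    have hexp2 : (rstar (m + 1) + ε / (t (m + 1) - t m)) / B
        = rstar (m + 1) / B + ε / (B * (t (m + 1) - t m)) := by
      field_simp
    rw [hexp1, hexp2] at hEdiff
    set X := Real.exp (rstar m / B - ε / (B * (t m - t (m - 1)))) with hX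
    set Y := Real.exp (rstar (m + 1) / B + ε / (B * (t (m + 1) - t m))) with hY
    set P := Real.exp (rstar m / B) with hP
    set Q := Real.exp (rstar (m + 1) / B) with hQ
    have hkey' : B * ((t m - t (m-1)) * X + (t (m+1) - t m) * Y)
        < B * ((t m - t (m-1)) * P + (t (m+1) - t m) * Q) := by
      ring_nf
      ring_nf at hkey
      linarith
    have h4 := (mul_lt_mul_iff_right₀ hB).mp hkey'
    have h5 : (X - P) * (σ2 / h) * (t m - t (m - 1))
        + (Y - Q) * (σ2 / h) * (t (m + 1) - t m) < 0 := by
      have heq : (X - P) * (σ2 / h) * (t m - t (m - 1))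
          + (Y - Q) * (σ2 / h) * (t (m + 1) - t m)
          = (σ2 / h) * (((t m - t (m-1)) * X + (t (m+1) - t m) * Y)
            - ((t m - t (m-1)) * P + (t (m+1) - t m) * Q)) := by ring
      rw [heq]
      exact mul_neg_of_pos_of_neg (by positivity) (by linarith)
    linarith [hEdiff ▸ hE]
  · -- increase case
    intro hinc
    by_contra hne
    have hSm : S < A m := lt_of_le_of_ne (hcum m hmem).2 hne
    have hrm0 : 0 < rstar (m + 1) := lt_of_le_of_lt (hpos m hmem) hinc
    have hab : rstar m / B < rstar (m + 1) / B := by gcongr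
    obtain ⟨ε, hε0, hεC, hkey⟩ := key_perturb (rstar (m + 1) / B) (rstar m / B)
      (B * (t (m + 1) - t m)) (B * (t m - t (m - 1)))
      (min (A m - S) (rstar (m + 1) * (t (m + 1) - t m))) hab
      (mul_pos hB hT2) (mul_pos hB hT1)
      (lt_min (by linarith) (mul_pos hrm0 hT2))
    have hεS : ε ≤ A m - S := le_trans hεC (min_le_left _ _)
    have hεr : ε ≤ rstar (m + 1) * (t (m + 1) - t m) := le_trans hεC (min_le_right _ _)
    set r' : ℕ → ℝ := fun k => rstar k +
      ((if k = m then ε / (t m - t (m - 1)) else 0) +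
       (if k = m + 1 then -(ε / (t (m + 1) - t m)) else 0)) with hr'
    have hr'm : r' m = rstar m + ε / (t m - t (m - 1)) := by
      have hne2 : m ≠ m + 1 := by omega
      show rstar m + ((if m = m then ε / (t m - t (m - 1)) else 0) +
        (if m = m + 1 then -(ε / (t (m + 1) - t m)) else 0)) = _
      rw [if_pos rfl, if_neg hne2]; ring
    have hr'm1 : r' (m + 1) = rstar (m + 1) - ε / (t (m + 1) - t m) := by
      have hne2 : m + 1 ≠ m := by omega
      show rstar (m + 1) + ((if m + 1 = m then ε / (t m - t (m - 1)) else 0) +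
        (if m + 1 = m + 1 then -(ε / (t (m + 1) - t m)) else 0)) = _
      rw [if_neg hne2, if_pos rfl]; ring
    have hagree : ∀ k, k ≠ m → k ≠ m + 1 → r' k = rstar k := by
      intro k h1 h2; simp [hr', h1, h2]
    have hsum : ∀ n, ∑ k ∈ Finset.Icc 1 n, r' k * (t k - t (k - 1))
        = (∑ k ∈ Finset.Icc 1 n, rstar k * (t k - t (k - 1)))
          + ((if m ∈ Finset.Icc 1 n then ε else 0)
          + (if (m + 1) ∈ Finset.Icc 1 n then -ε else 0)) := by
      intro n
      rw [hr', sum_shift_aux]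
      congr 2
      · split
        · field_simp
        · rfl
      · split
        · have hm11 : m + 1 - 1 = m := by omega
          rw [hm11]; field_simp
        · rfl
    have hfeas' : FeasibleBDA t R A M r' := by
      constructor
      · intro k hk
        by_cases h1 : k = m
        · subst h1
          rw [hr'm]
          have h0 := hpos k hk
          have h2 : 0 ≤ ε / (t k - t (k - 1)) := le_of_lt (div_pos hε0 hT1)
          linarith
        · by_cases h2 : k = m + 1
          · subst h2
            rw [hr'm1]
            rw [sub_nonneg, div_le_iff₀ hT2]; linarith
          · rw [hagree k h1 h2]; exact hpos k hk
      · intro n hn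
        rw [hsum n]
        obtain ⟨hlo, hhi⟩ := hcum n hn
        by_cases hnm : m ≤ n
        · by_cases hnm1 : m + 1 ≤ n
          · rw [if_pos (by simp only [Finset.mem_Icc]; omega),
              if_pos (by simp only [Finset.mem_Icc]; omega)]
            constructor <;> linarith
          · have hnm' : n = m := by omega
            subst hnm'
            rw [if_pos (by simp only [Finset.mem_Icc]; omega),
              if_neg (by simp only [Finset.mem_Icc]; omega)]
            constructor <;> linarith
        · rw [if_neg (by simp only [Finset.mem_Icc]; omega),
            if_neg (by simp only [Finset.mem_Icc]; omega)]
          constructor <;> linarith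
    have hE := hopt r' hfeas'
    have hEdiff := energy_two_diff B σ2 h t M rstar r' m hm1 hmM hagree
    rw [hr'm, hr'm1] at hEdiff
    have hexp1 : (rstar m + ε / (t m - t (m - 1))) / B
        = rstar m / B + ε / (B * (t m - t (m - 1))) := by
      field_simp
    have hexp2 : (rstar (m + 1) - ε / (t (m + 1) - t m)) / B
        = rstar (m + 1) / B - ε / (B * (t (m + 1) - t m)) := by
      field_simp
    rw [hexp1, hexp2] at hEdiff
    set X := Real.exp (rstar (m + 1) / B - ε / (B * (t (m + 1) - t m))) with hX
    set Y := Real.exp (rstar m / B + ε / (B * (t m - t (m - 1)))) with hY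
    set P := Real.exp (rstar (m + 1) / B) with hP
    set Q := Real.exp (rstar m / B) with hQ
    have hkey' : B * ((t (m+1) - t m) * X + (t m - t (m-1)) * Y)
        < B * ((t (m+1) - t m) * P + (t m - t (m-1)) * Q) := by
      ring_nf
      ring_nf at hkey
      linarith
    have h4 := (mul_lt_mul_iff_right₀ hB).mp hkey'
    have h5 : (Y - Q) * (σ2 / h) * (t m - t (m - 1))
        + (X - P) * (σ2 / h) * (t (m + 1) - t m) < 0 := by
      have heq : (Y - Q) * (σ2 / h) * (t m - t (m - 1))
          + (X - P) * (σ2 / h) * (t (m + 1) - t m)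
          = (σ2 / h) * (((t (m+1) - t m) * X + (t m - t (m-1)) * Y)
            - ((t (m+1) - t m) * P + (t m - t (m-1)) * Q)) := by ring
      rw [heq]
      exact mul_neg_of_pos_of_neg (by positivity) (by linarith)
    linarith [hEdiff ▸ hE]
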